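/- Let n ∈ ℕ, μ ∈ ℝⁿ, L an n×n real matrix, and let γ be the pushforward of the n-fold product of the standard real Gaussian measure (gaussianReal 0 1) under the affine map z ↦ μ + L·z, so that γ is a Gaussian measure with mean μ and covariance Σ = L Lᵀ. Then for every constant c ∈ ℝ, vector j ∈ ℝⁿ, and symmetric n×n matrix H, the expectation of the quadratic function x ↦ c + ⟨j, x − μ⟩ + (1/2)(x − μ)ᵀ H (x − μ) with respect to γ equals c + (1/2)·tr(H Σ). -/

import Mathlib

open MeasureTheory ProbabilityTheory Matrix

section Aux

open Real

private lemma gauss_pdf_eq (x : ℝ) :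
    gaussianPDFReal 0 1 x = (Real.sqrt (2*π))⁻¹ * Real.exp (-(1/2) * x^2) := by
  simp only [gaussianPDFReal, NNReal.coe_one, mul_one, sub_zero]
  ring_nf

private lemma gauss_L1 : ∫ x : ℝ, x * Real.exp (-(1/2) * x^2) = 0 := by
  have hderiv : ∀ x : ℝ, HasDerivAt (fun x : ℝ => -Real.exp (-(1/2) * x^2))
      (x * Real.exp (-(1/2) * x^2)) x := by
    intro x
    have h := (((hasDerivAt_pow 2 x).const_mul (-(1/2 : ℝ))).exp).neg
    refine h.congr_deriv ?_
    simp
    ring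
  exact integral_eq_zero_of_hasDerivAt_of_integrable hderiv
    (integrable_mul_exp_neg_mul_sq one_half_pos) (integrable_exp_neg_mul_sq one_half_pos).neg

private lemma gauss_Lsq : Integrable fun x : ℝ => x^2 * Real.exp (-(1/2) * x^2) := by
  have := integrable_rpow_mul_exp_neg_mul_sq (b := 1/2) one_half_pos (s := 2) (by norm_num)
  have h2 : ∀ x : ℝ, x ^ (2:ℝ) = x ^ (2:ℕ) := fun x => by
    rw [← Real.rpow_natCast x 2]; norm_num
  simpa [h2] using this

private lemma gauss_L2 : ∫ x : ℝ, x^2 * Real.exp (-(1/2) * x^2) = Real.sqrt (2*π) := by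
  have hderiv : ∀ x : ℝ, HasDerivAt (fun x : ℝ => -(x * Real.exp (-(1/2) * x^2)))
      (x^2 * Real.exp (-(1/2) * x^2) - Real.exp (-(1/2) * x^2)) x := by
    intro x
    have h := ((hasDerivAt_id x).mul (((hasDerivAt_pow 2 x).const_mul (-(1/2 : ℝ))).exp)).neg
    refine h.congr_deriv ?_
    simp
    ring
  have hzero : ∫ x : ℝ, (x^2 * Real.exp (-(1/2) * x^2) - Real.exp (-(1/2) * x^2)) = 0 :=
    integral_eq_zero_of_hasDerivAt_of_integrable hderiv
      (gauss_Lsq.sub (integrable_exp_neg_mul_sq one_half_pos))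
      (integrable_mul_exp_neg_mul_sq one_half_pos).neg
  have hs := integral_sub gauss_Lsq (integrable_exp_neg_mul_sq one_half_pos)
  rw [hs] at hzero
  have hg : ∫ x : ℝ, Real.exp (-(1/2) * x^2) = Real.sqrt (2*π) := by
    rw [integral_gaussian (1/2), show π/(1/2 : ℝ) = 2*π by ring]
  linarith [hzero, hg]

private lemma gauss_withDensity :
    gaussianReal 0 1 = (volume : Measure ℝ).withDensity
      (fun x => ((gaussianPDFReal 0 1 x).toNNReal : ENNReal)) := by
  rw [gaussianReal_of_var_ne_zero _ one_ne_zero]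
  rfl

private lemma gauss_integrable_iff (g : ℝ → ℝ) :
    Integrable g (gaussianReal 0 1) ↔
      Integrable (fun x => gaussianPDFReal 0 1 x * g x) volume := by
  rw [gauss_withDensity,
    integrable_withDensity_iff_integrable_smul (measurable_gaussianPDFReal 0 1).real_toNNReal]
  refine integrable_congr (Filter.Eventually.of_forall fun x => ?_)
  simp [NNReal.smul_def, Real.coe_toNNReal _ (gaussianPDFReal_nonneg 0 1 x)]

private lemma gauss_integral (g : ℝ → ℝ) :
    ∫ x, g x ∂(gaussianReal 0 1) = ∫ x, gaussianPDFReal 0 1 x * g x := by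
  rw [gauss_withDensity,
    integral_withDensity_eq_integral_smul (measurable_gaussianPDFReal 0 1).real_toNNReal]
  refine integral_congr_ae (Filter.Eventually.of_forall fun x => ?_)
  simp [NNReal.smul_def, Real.coe_toNNReal _ (gaussianPDFReal_nonneg 0 1 x)]

private lemma sqrt2pi_ne : Real.sqrt (2*π) ≠ 0 := by positivity

private lemma gauss_G1i : Integrable (fun x : ℝ => x) (gaussianReal 0 1) := by
  rw [gauss_integrable_iff]
  have h : (fun x : ℝ => gaussianPDFReal 0 1 x * x)
      = fun x => (Real.sqrt (2*π))⁻¹ * (x * Real.exp (-(1/2) * x^2)) := by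
    funext x; rw [gauss_pdf_eq]; ring
  rw [h]
  exact (integrable_mul_exp_neg_mul_sq one_half_pos).const_mul _

private lemma gauss_G2i : Integrable (fun x : ℝ => x^2) (gaussianReal 0 1) := by
  rw [gauss_integrable_iff]
  have h : (fun x : ℝ => gaussianPDFReal 0 1 x * x^2)
      = fun x => (Real.sqrt (2*π))⁻¹ * (x^2 * Real.exp (-(1/2) * x^2)) := by
    funext x; rw [gauss_pdf_eq]; ring
  rw [h]
  exact gauss_Lsq.const_mul _

private lemma gauss_G1 : ∫ x, x ∂(gaussianReal 0 1) = 0 := by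
  rw [gauss_integral]
  have h : (fun x : ℝ => gaussianPDFReal 0 1 x * x)
      = fun x => (Real.sqrt (2*π))⁻¹ * (x * Real.exp (-(1/2) * x^2)) := by
    funext x; rw [gauss_pdf_eq]; ring
  rw [h, integral_const_mul, gauss_L1, mul_zero]

private lemma gauss_G2 : ∫ x, x^2 ∂(gaussianReal 0 1) = 1 := by
  rw [gauss_integral]
  have h : (fun x : ℝ => gaussianPDFReal 0 1 x * x^2)
      = fun x => (Real.sqrt (2*π))⁻¹ * (x^2 * Real.exp (-(1/2) * x^2)) := by
    funext x; rw [gauss_pdf_eq]; ring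
  rw [h, integral_const_mul, gauss_L2, inv_mul_cancel₀ sqrt2pi_ne]

end Aux

section PiGauss

noncomputable local instance gaussSpace : MeasureSpace ℝ := ⟨gaussianReal 0 1⟩

private lemma vol_eq : (volume : Measure ℝ) = gaussianReal 0 1 := rfl

local instance : IsProbabilityMeasure (volume : Measure ℝ) := by
  rw [vol_eq]; infer_instance

local instance : SigmaFinite (volume : Measure ℝ) := by
  rw [vol_eq]; infer_instance

variable {n : ℕ}

private lemma pi_eq :
    (volume : Measure (Fin n → ℝ)) = Measure.pi (fun _ => gaussianReal 0 1) := rfl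

/-- factor for first moment -/
private noncomputable def F1 (i : Fin n) : Fin n → ℝ → ℝ := fun m x => if m = i then x else 1
/-- factor for second moment -/
private noncomputable def F2 (i k : Fin n) : Fin n → ℝ → ℝ :=
  fun m x => (if m = i then x else 1) * (if m = k then x else 1)

private lemma hF1 (i : Fin n) :
    (fun z : Fin n → ℝ => z i) = fun z => ∏ m, F1 i m (z m) := by
  funext z; simp [F1, Finset.prod_ite_eq']

private lemma hF2 (i k : Fin n) :
    (fun z : Fin n → ℝ => z i * z k) = fun z => ∏ m, F2 i k m (z m) := by
  funext z
  rw [show (∏ m, F2 i k m (z m)) = (∏ m, (if m = i then z m else 1))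
      * (∏ m, (if m = k then z m else 1)) from Finset.prod_mul_distrib]
  simp [Finset.prod_ite_eq']

private lemma P1i (i : Fin n) : Integrable (fun z : Fin n → ℝ => z i) volume := by
  rw [hF1]
  refine Integrable.fintype_prod (f := F1 i) fun m => ?_
  unfold F1
  by_cases hm : m = i <;> simp only [hm, if_pos, if_neg, ite_true, ite_false, vol_eq]
  · exact gauss_G1i
  · exact integrable_const 1

private lemma P1 (i : Fin n) : ∫ z : Fin n → ℝ, z i = 0 := by
  rw [hF1, pi_eq, integral_fintype_prod_eq_prod (F1 i)]
  exact Finset.prod_eq_zero (Finset.mem_univ i) (by simp [F1, vol_eq, gauss_G1])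

private lemma P2i (i k : Fin n) : Integrable (fun z : Fin n → ℝ => z i * z k) volume := by
  rw [hF2]
  refine Integrable.fintype_prod (f := F2 i k) fun m => ?_
  unfold F2
  rw [vol_eq]
  by_cases hi : m = i
  · subst hi
    by_cases hk : m = k
    · subst hk; simp only [ite_true]; simpa [sq] using gauss_G2i
    · simp only [ite_true, if_neg hk, mul_one]; exact gauss_G1i
  · by_cases hk : m = k
    · subst hk; simp only [if_neg hi, ite_true, one_mul]; exact gauss_G1i
    · simp only [if_neg hi, if_neg hk, mul_one]; exact integrable_const 1

private lemma P2 (i k : Fin n) :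
    ∫ z : Fin n → ℝ, z i * z k = if i = k then 1 else 0 := by
  rw [hF2, pi_eq, integral_fintype_prod_eq_prod (F2 i k)]
  by_cases hik : i = k
  · subst hik
    simp only [if_pos rfl]
    refine Finset.prod_eq_one fun m _ => ?_
    by_cases hm : m = i
    · subst hm
      simpa [F2, vol_eq, sq] using gauss_G2
    · simp [F2, hm, vol_eq]
  · rw [if_neg hik]
    refine Finset.prod_eq_zero (Finset.mem_univ i) ?_
    simp [F2, hik, vol_eq, gauss_G1]

private lemma key (a : Fin n → ℝ) (M : Matrix (Fin n) (Fin n) ℝ) (c : ℝ) :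
    ∫ z : Fin n → ℝ, (c + a ⬝ᵥ z + (1/2) * (z ⬝ᵥ M.mulVec z))
      = c + (1/2) * M.trace := by
  have hexp : (fun z : Fin n → ℝ => c + a ⬝ᵥ z + (1/2) * (z ⬝ᵥ M.mulVec z))
      = fun z => c + (∑ k, a k * z k) + (1/2) * (∑ i, ∑ k, M i k * (z i * z k)) := by
    funext z
    simp only [dotProduct, mulVec]
    congr 1
    congr 1
    refine Finset.sum_congr rfl fun i _ => ?_
    rw [Finset.mul_sum]
    exact Finset.sum_congr rfl fun k _ => by ring
  rw [hexp]
  have h1 : Integrable (fun z : Fin n → ℝ => ∑ k, a k * z k) volume :=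
    integrable_finset_sum _ fun k _ => (P1i k).const_mul (a k)
  have h2 : Integrable (fun z : Fin n → ℝ => ∑ i, ∑ k, M i k * (z i * z k)) volume :=
    integrable_finset_sum _ fun i _ =>
      integrable_finset_sum _ fun k _ => (P2i i k).const_mul (M i k)
  have h1' : Integrable (fun z : Fin n → ℝ => c + ∑ k, a k * z k) volume :=
    (integrable_const c).add h1
  have h2' : Integrable (fun z : Fin n → ℝ =>
      (1/2) * ∑ i, ∑ k, M i k * (z i * z k)) volume := h2.const_mul (1/2)
  rw [integral_add h1' h2',
    integral_add (integrable_const c) h1, integral_const, integral_const_mul,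
    integral_finset_sum _ fun k _ => (P1i k).const_mul (a k),
    integral_finset_sum _ fun i _ =>
      integrable_finset_sum _ fun k _ => (P2i i k).const_mul (M i k)]
  have e1 : ∀ k : Fin n, ∫ z : Fin n → ℝ, a k * z k = 0 := fun k => by
    rw [integral_const_mul, P1, mul_zero]
  have e2 : ∀ i : Fin n, (∑ k, ∫ z : Fin n → ℝ, M i k * (z i * z k)) = M i i := by
    intro i
    have h : ∀ k : Fin n, ∫ z : Fin n → ℝ, M i k * (z i * z k)
        = if i = k then M i k else 0 := fun k => by
      rw [integral_const_mul, P2]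
      by_cases h : i = k <;> simp [h]
    simp [h]
  have e3 : ∀ i : Fin n, ∫ z : Fin n → ℝ, ∑ k, M i k * (z i * z k) = M i i := fun i => by
    rw [integral_finset_sum _ fun k _ => (P2i i k).const_mul (M i k)]; exact e2 i
  simp only [e1, Finset.sum_const_zero, add_zero, e3]
  simp [Matrix.trace, Matrix.diag, measure_univ]

private lemma key_ext (a : Fin n → ℝ) (M : Matrix (Fin n) (Fin n) ℝ) (c : ℝ) :
    ∫ z : Fin n → ℝ, (c + a ⬝ᵥ z + (1/2) * (z ⬝ᵥ M.mulVec z))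
        ∂(Measure.pi fun _ : Fin n => gaussianReal 0 1)
      = c + (1/2) * M.trace := by
  rw [← pi_eq]; exact key a M c

end PiGauss

/-- For the Gaussian measure `γ` on `ℝⁿ` with mean `μ` and covariance `Σ = L Lᵀ`
(the pushforward of the product of standard Gaussians under `z ↦ μ + L z`), the expectation
of the quadratic function `x ↦ c + ⟨j, x − μ⟩ + (1/2)(x − μ)ᵀ H (x − μ)` equals
`c + (1/2)·tr(H Σ)`. -/
theorem gaussian_expectation_quadratic
    {n : ℕ} (μ : Fin n → ℝ) (L : Matrix (Fin n) (Fin n) ℝ)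
    (γ : Measure (Fin n → ℝ))
    (hγ : γ = Measure.map (fun z : Fin n → ℝ => μ + L.mulVec z)
      (Measure.pi fun _ : Fin n => gaussianReal 0 1))
    (c : ℝ) (j : Fin n → ℝ)
    (H : Matrix (Fin n) (Fin n) ℝ) (hH : H.IsSymm) :
    ∫ x, (c + j ⬝ᵥ (x - μ) + (1 / 2) * ((x - μ) ⬝ᵥ H.mulVec (x - μ))) ∂γ =
      c + (1 / 2) * (H * (L * Lᵀ)).trace := by
  have hLm : Measurable fun z : Fin n → ℝ => L.mulVec z := by
    apply measurable_pi_lambda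
    intro i
    simp only [mulVec, dotProduct]
    exact Finset.measurable_sum _ fun k _ => by fun_prop
  have hφ : Measurable fun z : Fin n → ℝ => μ + L.mulVec z := measurable_const.add hLm
  have hcont : Continuous fun x : Fin n → ℝ =>
      c + j ⬝ᵥ (x - μ) + (1 / 2) * ((x - μ) ⬝ᵥ H.mulVec (x - μ)) := by
    have h1 : Continuous fun x : Fin n → ℝ => j ⬝ᵥ (x - μ) := by
      simp only [dotProduct, Pi.sub_apply]
      exact continuous_finset_sum _ fun k _ =>
        continuous_const.mul ((continuous_apply k).sub continuous_const)
    have h2 : Continuous fun x : Fin n → ℝ => (x - μ) ⬝ᵥ H.mulVec (x - μ) := by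
      simp only [dotProduct, mulVec, Pi.sub_apply]
      exact continuous_finset_sum _ fun i _ =>
        (((continuous_apply i).sub continuous_const).mul
          (continuous_finset_sum _ fun k _ =>
            continuous_const.mul ((continuous_apply k).sub continuous_const)))
    exact (continuous_const.add h1).add (continuous_const.mul h2)
  rw [hγ, integral_map hφ.aemeasurable hcont.aestronglyMeasurable]
  have hsimp : (fun z : Fin n → ℝ =>
      c + j ⬝ᵥ (μ + L.mulVec z - μ) + (1/2) * ((μ + L.mulVec z - μ) ⬝ᵥ H.mulVec (μ + L.mulVec z - μ)))
      = fun z => c + (j ᵥ* L) ⬝ᵥ z + (1/2) * (z ⬝ᵥ (Lᵀ * H * L).mulVec z) := by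
    funext z
    rw [add_sub_cancel_left]
    congr 1
    · congr 1
      exact dotProduct_mulVec j L z
    · congr 1
      rw [← mulVec_mulVec, ← mulVec_mulVec, dotProduct_mulVec z, vecMul_transpose]
  rw [hsimp, key_ext (j ᵥ* L) (Lᵀ * H * L) c, Matrix.trace_mul_cycle,
    Matrix.trace_mul_comm]
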